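/- In the setting of the potential-theoretic ensemble: let K be compact, regular, with connected complement, w_K = e^{−g_K}, and let Ω_{N,s,β} be the probability density on ℂ^N proportional to exp{−βsΣg_K(z_n)}∏_{m<n}|z_n−z_m|^β, with β(s−N+1) > 2+c_0 and N^{−2} log Z_{N,s,β} → −(β/2)I[ω_K]. For ε > 0 let U_{N,ε} := {(z_1,…,z_N) : ∏_{m<n}|z_n−z_m| ∏_n w_K(z_n)^{N−1} ≥ exp{−(I[ω_K]+ε)N(N−1)/2}}. Then ∫_{ℂ^N∖U_{N,ε}} Ω_{N,s,β} dA^{⊗N} ≤ exp{−β(ε + o(1)) N(N−1)/2} as N → ∞. -/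

import Mathlib

open MeasureTheory Filter Set
open scoped ENNReal Topology

private lemma exp_rpow'' (a b : ℝ) : Real.exp a ^ b = Real.exp (a * b) := by
  rw [Real.rpow_def_of_pos (Real.exp_pos a), Real.log_exp]

/-- Exponential smallness of the low-"energy" event.  With K compact and regular,
g_K the Green function (continuous, ≥ 0, vanishing on K, logarithmic at ∞),
w_K = e^{−g_K}, β(s−N+1) > 2+c₀, Z_{N,s,β} the partition function and
N⁻² log Z_{N,s,β} → −(β/2) I[ω_K], set
`U_{N,ε} = {z : ∏_{m<n}|z_n−z_m| ∏_n w_K(z_n)^{N−1} ≥ e^{−(I[ω_K]+ε)N(N−1)/2}}`.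
Then `∫_{ℂ^N ∖ U_{N,ε}} Ω_{N,s,β} dA^{⊗N} ≤ e^{−β(ε+o(1))N(N−1)/2}` as N → ∞. -/
theorem stmt15 (K : Set ℂ) (hK : IsCompact K)
    (g : ℂ → ℝ) (hg_cont : Continuous g) (hg_nonneg : ∀ z, 0 ≤ g z)
    (hg_zero : ∀ z ∈ K, g z = 0)
    (C R : ℝ) (hgrow : ∀ z : ℂ, R ≤ ‖z‖ →
      |g z - Real.log ‖z‖| ≤ C)
    (β c₀ : ℝ) (hβ : 0 < β) (hc₀ : 0 < c₀)
    (s : ℕ → ℝ) (hs : ∀ N : ℕ, 2 + c₀ < β * (s N - (N : ℝ) + 1))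
    (Z : ℕ → ℝ)
    (hZ : ∀ N : ℕ, Z N = ∫ z : Fin N → ℂ,
        Real.exp (-β * s N * ∑ n : Fin N, g (z n)) *
          ∏ p ∈ Finset.univ.filter (fun p : Fin N × Fin N => p.1 < p.2),
            ‖z p.2 - z p.1‖ ^ β
        ∂(Measure.pi fun _ : Fin N => (volume : Measure ℂ)))
    (IK : ℝ)
    (hlim : Tendsto (fun N : ℕ => ((N : ℝ) ^ 2)⁻¹ * Real.log (Z N)) atTop
      (nhds (-(β / 2) * IK)))
    (ε : ℝ) (hε : 0 < ε) :
    ∃ e : ℕ → ℝ, Tendsto e atTop (nhds 0) ∧ ∀ N : ℕ,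
      (∫ z in {z : Fin N → ℂ |
          ¬ (Real.exp (-(IK + ε) * ((N : ℝ) * ((N : ℝ) - 1)) / 2) ≤
              (∏ p ∈ Finset.univ.filter (fun p : Fin N × Fin N => p.1 < p.2),
                ‖z p.2 - z p.1‖) *
                ∏ n : Fin N, Real.exp (-g (z n)) ^ (N - 1))},
        (Z N)⁻¹ * (Real.exp (-β * s N * ∑ n : Fin N, g (z n)) *
          ∏ p ∈ Finset.univ.filter (fun p : Fin N × Fin N => p.1 < p.2),
            ‖z p.2 - z p.1‖ ^ β)
        ∂(Measure.pi fun _ : Fin N => (volume : Measure ℂ)))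
      ≤ Real.exp (-β * (ε + e N) * ((N : ℝ) * ((N : ℝ) - 1)) / 2) := by
  classical
  set r : ℝ := 2 + c₀ with hr
  have hr0 : 0 < r := by positivity
  -- integrability of w_K ^ r
  have hw_int : Integrable (fun z : ℂ => Real.exp (-r * g z)) volume := by
    set R' : ℝ := max R 1 with hR'
    have hR'1 : (1:ℝ) ≤ R' := le_max_right _ _
    set D : ℝ := max ((1 + R') ^ r) (Real.exp (r * C) * 2 ^ r) with hD
    have hmeas : AEStronglyMeasurable (fun z : ℂ => Real.exp (-r * g z)) volume :=
      (Real.continuous_exp.comp (continuous_const.mul hg_cont)).aestronglyMeasurable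
    have hint : Integrable (fun z : ℂ => D * (1 + ‖z‖) ^ (-r)) volume := by
      refine (integrable_one_add_norm ?_).const_mul _
      rw [Complex.finrank_real_complex]
      norm_num [hr]
      linarith
    refine hint.mono' hmeas (Eventually.of_forall fun z => ?_)
    rw [Real.norm_eq_abs, abs_of_pos (Real.exp_pos _)]
    have h1z : (0:ℝ) < 1 + ‖z‖ := by positivity
    rcases le_or_gt ‖z‖ R' with hz | hz
    · have h1 : Real.exp (-r * g z) ≤ 1 := by
        rw [Real.exp_le_one_iff]
        have := hg_nonneg z; nlinarith
      have h2 : (1:ℝ) ≤ D * (1 + ‖z‖) ^ (-r) := by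
        have hb : (1 + R') ^ (-r) ≤ (1 + ‖z‖) ^ (-r) :=
          Real.rpow_le_rpow_of_nonpos h1z (by linarith) (by linarith)
        have h3 : (1 + R') ^ r * (1 + R') ^ (-r) = 1 := by
          rw [← Real.rpow_add (by linarith), add_neg_cancel, Real.rpow_zero]
        calc (1:ℝ) = (1 + R') ^ r * (1 + R') ^ (-r) := h3.symm
          _ ≤ D * (1 + ‖z‖) ^ (-r) := by
              refine mul_le_mul (le_max_left _ _) hb (Real.rpow_nonneg (by linarith) _) ?_
              exact le_trans (Real.rpow_nonneg (by linarith) _) (le_max_left _ _)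
      exact le_trans h1 h2
    · -- ‖z‖ > R' ≥ max R 1
      have hzR : R ≤ ‖z‖ := by
        exact le_trans (le_max_left _ _) hz.le
      have hz1 : (1:ℝ) < ‖z‖ := lt_of_le_of_lt hR'1 hz
      have hz0 : (0:ℝ) < ‖z‖ := by linarith
      have hlog : Real.log ‖z‖ - C ≤ g z := by
        have := (abs_le.mp (hgrow z hzR)).1
        linarith
      have h1 : Real.exp (-r * g z) ≤ Real.exp (r * C) * ‖z‖ ^ (-r) := by
        rw [Real.rpow_def_of_pos hz0, ← Real.exp_add]
        apply Real.exp_le_exp.mpr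
        nlinarith
      have h2 : ‖z‖ ^ (-r) ≤ 2 ^ r * (1 + ‖z‖) ^ (-r) := by
        have hb : (2 * ‖z‖) ^ (-r) ≤ (1 + ‖z‖) ^ (-r) :=
          Real.rpow_le_rpow_of_nonpos h1z (by linarith) (by linarith)
        have h3 : (2 * ‖z‖) ^ (-r) = 2 ^ (-r) * ‖z‖ ^ (-r) :=
          Real.mul_rpow (by norm_num) hz0.le
        have h4 : (2:ℝ) ^ r * (2:ℝ) ^ (-r) = 1 := by
          rw [← Real.rpow_add (by norm_num), add_neg_cancel, Real.rpow_zero]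
        calc ‖z‖ ^ (-r) = 2 ^ r * ((2:ℝ) ^ (-r) * ‖z‖ ^ (-r)) := by
              rw [← mul_assoc, h4, one_mul]
          _ = 2 ^ r * (2 * ‖z‖) ^ (-r) := by rw [h3]
          _ ≤ 2 ^ r * (1 + ‖z‖) ^ (-r) := by
              exact mul_le_mul_of_nonneg_left hb (Real.rpow_nonneg (by norm_num) _)
      calc Real.exp (-r * g z) ≤ Real.exp (r * C) * ‖z‖ ^ (-r) := h1
        _ ≤ Real.exp (r * C) * (2 ^ r * (1 + ‖z‖) ^ (-r)) :=
            mul_le_mul_of_nonneg_left h2 (Real.exp_pos _).le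
        _ = Real.exp (r * C) * 2 ^ r * (1 + ‖z‖) ^ (-r) := by ring
        _ ≤ D * (1 + ‖z‖) ^ (-r) :=
            mul_le_mul_of_nonneg_right (le_max_right _ _) (Real.rpow_nonneg h1z.le _)
  set A : ℝ := ∫ z : ℂ, Real.exp (-r * g z) with hA
  have hA_pos : 0 < A := by
    rw [hA, integral_pos_iff_support_of_nonneg (fun z => (Real.exp_pos _).le) hw_int]
    have : Function.support (fun z : ℂ => Real.exp (-r * g z)) = univ :=
      eq_univ_of_forall fun z => (Real.exp_pos _).ne'
    rw [this]
    exact isOpen_univ.measure_pos volume univ_nonempty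
  refine ⟨fun N => (2 / β) * (1 + ((N:ℝ) - 1)⁻¹) * (((N:ℝ) ^ 2)⁻¹ * Real.log (Z N)) + IK
      - (2 * Real.log A / β) * ((N:ℝ) - 1)⁻¹, ?_, ?_⟩
  · -- the limit
    have h1 : Tendsto (fun N : ℕ => ((N:ℝ) - 1)⁻¹) atTop (nhds 0) := by
      apply tendsto_inv_atTop_zero.comp
      exact tendsto_atTop_add_const_right _ (-1) tendsto_natCast_atTop_atTop
    have hmain := (((tendsto_const_nhds (x := (2:ℝ)/β)).mul
        ((tendsto_const_nhds (x := (1:ℝ))).add h1)).mul hlim).add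
        (tendsto_const_nhds (x := IK)) |>.sub
        ((tendsto_const_nhds (x := 2 * Real.log A / β)).mul h1)
    have heq : (2 / β) * (1 + 0) * (-(β / 2) * IK) + IK - (2 * Real.log A / β) * 0 = 0 := by
      field_simp
      ring
    rw [heq] at hmain
    exact hmain
  · -- the bound for each N
    intro N
    rcases lt_or_ge N 2 with hN | hN
    · -- N = 0 or 1 : the set is empty
      have hempty : {z : Fin N → ℂ |
          ¬ (Real.exp (-(IK + ε) * ((N : ℝ) * ((N : ℝ) - 1)) / 2) ≤
              (∏ p ∈ Finset.univ.filter (fun p : Fin N × Fin N => p.1 < p.2),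
                ‖z p.2 - z p.1‖) *
                ∏ n : Fin N, Real.exp (-g (z n)) ^ (N - 1))} = ∅ := by
        interval_cases N
        · refine eq_empty_of_forall_notMem fun z hzz => hzz ?_
          simp
        · refine eq_empty_of_forall_notMem fun z hzz => hzz ?_
          have h2 : (Finset.univ.filter (fun p : Fin 1 × Fin 1 => p.1 < p.2)) = ∅ := by decide
          simp [h2]
      rw [hempty]
      simp only [Measure.restrict_empty, integral_zero_measure]
      exact (Real.exp_pos _).le
    · -- N ≥ 2
      have hN2 : (2:ℝ) ≤ (N:ℝ) := by exact_mod_cast hN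
      have hN0 : ((N:ℝ)) ≠ 0 := by linarith
      have hN1 : ((N:ℝ)) - 1 ≠ 0 := by linarith
      have hZnn : 0 ≤ Z N := by
        rw [hZ N]
        refine integral_nonneg fun z => ?_
        refine mul_nonneg (Real.exp_pos _).le (Finset.prod_nonneg fun p _ => ?_)
        exact Real.rpow_nonneg (norm_nonneg _) _
      rcases eq_or_lt_of_le hZnn with hZ0 | hZpos
      · -- Z N = 0 : the integrand vanishes
        simp only [← hZ0, inv_zero, zero_mul, integral_zero]
        exact (Real.exp_pos _).le
      -- main case
      set S : Set (Fin N → ℂ) := {z : Fin N → ℂ |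
          ¬ (Real.exp (-(IK + ε) * ((N : ℝ) * ((N : ℝ) - 1)) / 2) ≤
              (∏ p ∈ Finset.univ.filter (fun p : Fin N × Fin N => p.1 < p.2),
                ‖z p.2 - z p.1‖) *
                ∏ n : Fin N, Real.exp (-g (z n)) ^ (N - 1))} with hS
      have hScont : Continuous (fun z : Fin N → ℂ =>
          (∏ p ∈ Finset.univ.filter (fun p : Fin N × Fin N => p.1 < p.2),
            ‖z p.2 - z p.1‖) *
            ∏ n : Fin N, Real.exp (-g (z n)) ^ (N - 1)) := by
        refine Continuous.mul ?_ ?_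
        · refine continuous_finset_prod _ fun p _ => ?_
          exact continuous_norm.comp ((continuous_apply p.2).sub (continuous_apply p.1))
        · refine continuous_finset_prod _ fun n _ => ?_
          exact (Real.continuous_exp.comp ((hg_cont.comp (continuous_apply n)).neg)).pow _
      have hSmeas : MeasurableSet S := by
        have : S = (fun z : Fin N → ℂ =>
            (∏ p ∈ Finset.univ.filter (fun p : Fin N × Fin N => p.1 < p.2),
              ‖z p.2 - z p.1‖) *
              ∏ n : Fin N, Real.exp (-g (z n)) ^ (N - 1)) ⁻¹'
            (Iio (Real.exp (-(IK + ε) * ((N : ℝ) * ((N : ℝ) - 1)) / 2))) := by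
          ext z; simp [hS, not_le]
        rw [this]
        exact hScont.measurable measurableSet_Iio
      -- the dominating function
      set h : (Fin N → ℂ) → ℝ := fun z => (Z N)⁻¹ *
          (Real.exp (-β * (IK + ε) * ((N : ℝ) * ((N : ℝ) - 1)) / 2) *
            ∏ n : Fin N, Real.exp (-r * g (z n))) with hh
      have hprod_int : Integrable (fun z : Fin N → ℂ => ∏ n : Fin N, Real.exp (-r * g (z n)))
          (volume : Measure (Fin N → ℂ)) :=
        Integrable.fintype_prod (f := fun _ : Fin N => fun x : ℂ => Real.exp (-r * g x))
          fun _ => hw_int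
      have hh_int : Integrable h (volume : Measure (Fin N → ℂ)) := by
        simpa [hh, mul_assoc] using (hprod_int.const_mul
          ((Z N)⁻¹ * Real.exp (-β * (IK + ε) * ((N : ℝ) * ((N : ℝ) - 1)) / 2)))
      have hh_nonneg : ∀ z, 0 ≤ h z := by
        intro z
        refine mul_nonneg (inv_nonneg.mpr hZnn) (mul_nonneg (Real.exp_pos _).le ?_)
        exact Finset.prod_nonneg fun n _ => (Real.exp_pos _).le
      have hvol : (Measure.pi fun _ : Fin N => (volume : Measure ℂ))
          = (volume : Measure (Fin N → ℂ)) := volume_pi.symm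
      rw [hvol]
      -- pointwise bound on S
      have hpt : ∀ z ∈ S, (Z N)⁻¹ * (Real.exp (-β * s N * ∑ n : Fin N, g (z n)) *
          ∏ p ∈ Finset.univ.filter (fun p : Fin N × Fin N => p.1 < p.2),
            ‖z p.2 - z p.1‖ ^ β) ≤ h z := by
        intro z hzS
        set T : ℝ := ∑ n : Fin N, g (z n) with hT
        have hT0 : 0 ≤ T := Finset.sum_nonneg fun n _ => hg_nonneg _
        set P : ℝ := ∏ p ∈ Finset.univ.filter (fun p : Fin N × Fin N => p.1 < p.2),
            ‖z p.2 - z p.1‖ with hP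
        have hP0 : 0 ≤ P :=
          Finset.prod_nonneg fun p _ => norm_nonneg _
        have hW : (∏ n : Fin N, Real.exp (-g (z n)) ^ (N - 1))
            = Real.exp (-(((N:ℝ) - 1) * T)) := by
          have hc : ((N - 1 : ℕ) : ℝ) = (N:ℝ) - 1 := by
            rw [Nat.cast_sub (by omega), Nat.cast_one]
          simp only [← Real.exp_nat_mul, ← Real.exp_sum]
          congr 1
          rw [← Finset.mul_sum, hc, hT]
          ring_nf
          rw [Finset.sum_neg_distrib]
          ring
        have hPW : P * Real.exp (-(((N:ℝ) - 1) * T))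
            < Real.exp (-(IK + ε) * ((N : ℝ) * ((N : ℝ) - 1)) / 2) := by
          have := not_le.mp hzS
          rw [hW] at this
          exact this
        have hPle : P ≤ Real.exp (-(IK + ε) * ((N : ℝ) * ((N : ℝ) - 1)) / 2
            + ((N:ℝ) - 1) * T) := by
          have h2 := mul_le_mul_of_nonneg_right hPW.le (Real.exp_pos (((N:ℝ) - 1) * T)).le
          rw [mul_assoc, ← Real.exp_add, neg_add_cancel, Real.exp_zero, mul_one,
            ← Real.exp_add] at h2
          exact h2
        have hprodβ : (∏ p ∈ Finset.univ.filter (fun p : Fin N × Fin N => p.1 < p.2),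
            ‖z p.2 - z p.1‖ ^ β) = P ^ β :=
          Real.finset_prod_rpow _ _ (fun p _ => norm_nonneg _) β
        have hPβ : P ^ β ≤ Real.exp ((-(IK + ε) * ((N : ℝ) * ((N : ℝ) - 1)) / 2
            + ((N:ℝ) - 1) * T) * β) := by
          rw [← exp_rpow'']
          exact Real.rpow_le_rpow hP0 hPle hβ.le
        refine mul_le_mul_of_nonneg_left ?_ (inv_nonneg.mpr hZnn)
        calc Real.exp (-β * s N * T) *
              (∏ p ∈ Finset.univ.filter (fun p : Fin N × Fin N => p.1 < p.2),
                ‖z p.2 - z p.1‖ ^ β)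
            ≤ Real.exp (-β * s N * T) * Real.exp ((-(IK + ε) * ((N : ℝ) * ((N : ℝ) - 1)) / 2
              + ((N:ℝ) - 1) * T) * β) := by
              rw [hprodβ]
              exact mul_le_mul_of_nonneg_left hPβ (Real.exp_pos _).le
          _ ≤ Real.exp (-β * (IK + ε) * ((N : ℝ) * ((N : ℝ) - 1)) / 2) *
              ∏ n : Fin N, Real.exp (-r * g (z n)) := by
              have hre : (∏ n : Fin N, Real.exp (-r * g (z n))) = Real.exp (-r * T) := by
                rw [← Real.exp_sum, hT, ← Finset.mul_sum]
              rw [hre, ← Real.exp_add, ← Real.exp_add, Real.exp_le_exp]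
              have hmul := mul_le_mul_of_nonneg_right (hs N).le hT0
              nlinarith [hmul]
      -- compare integrals
      have step1 : (∫ z in S, (Z N)⁻¹ * (Real.exp (-β * s N * ∑ n : Fin N, g (z n)) *
          ∏ p ∈ Finset.univ.filter (fun p : Fin N × Fin N => p.1 < p.2),
            ‖z p.2 - z p.1‖ ^ β) ∂(volume : Measure (Fin N → ℂ)))
          ≤ ∫ z, h z ∂(volume : Measure (Fin N → ℂ)) := by
        rw [← integral_indicator hSmeas]
        refine integral_mono_of_nonneg (Eventually.of_forall fun z => ?_) hh_int
          (Eventually.of_forall fun z => ?_)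
        · refine indicator_nonneg (fun z _ => ?_) z
          refine mul_nonneg (inv_nonneg.mpr hZnn) (mul_nonneg (Real.exp_pos _).le ?_)
          exact Finset.prod_nonneg fun p _ =>
            Real.rpow_nonneg (norm_nonneg _) _
        · by_cases hzS : z ∈ S
          · rw [indicator_of_mem hzS]
            exact hpt z hzS
          · rw [indicator_of_notMem hzS]
            exact hh_nonneg z
      have step2 : (∫ z, h z ∂(volume : Measure (Fin N → ℂ)))
          = (Z N)⁻¹ * (Real.exp (-β * (IK + ε) * ((N : ℝ) * ((N : ℝ) - 1)) / 2) * A ^ N) := by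
        rw [hh]
        rw [integral_const_mul, integral_const_mul]
        congr 1
        congr 1
        rw [integral_fintype_prod_volume_eq_pow (ι := Fin N) (fun x : ℂ => Real.exp (-r * g x)),
          Fintype.card_fin, hA]
      have step3 : (Z N)⁻¹ * (Real.exp (-β * (IK + ε) * ((N : ℝ) * ((N : ℝ) - 1)) / 2) * A ^ N)
          = Real.exp (-β * (ε + ((2 / β) * (1 + ((N:ℝ) - 1)⁻¹) *
              (((N:ℝ) ^ 2)⁻¹ * Real.log (Z N)) + IK
              - (2 * Real.log A / β) * ((N:ℝ) - 1)⁻¹)) * ((N : ℝ) * ((N : ℝ) - 1)) / 2) := by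
        rw [show (Z N)⁻¹ = Real.exp (-Real.log (Z N)) by
            rw [Real.exp_neg, Real.exp_log hZpos],
          show A ^ N = Real.exp ((N:ℝ) * Real.log A) by
            rw [Real.exp_nat_mul, Real.exp_log hA_pos],
          ← Real.exp_add, ← Real.exp_add]
        congr 1
        field_simp
        ring
      calc _ ≤ _ := step1
        _ = _ := step2
        _ = _ := step3
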